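/- For positive integers m and k with 1 ≤ k ≤ m, the following identity holds: k! · m^(m-k) · C(m-1, k-1) = Σ over tuples (a_1, ..., a_k) of positive integers with a_1 + ... + a_k = m of (Π_{i=1}^k a_i^(a_i - 1)) · m! / (Π_{i=1}^k a_i!). -/

import Mathlib

open Polynomial Finset

noncomputable def phi : ℕ → Polynomial ℚ
  | 0 => 1
  | (n+1) => X * (X + C ((n : ℚ) + 1)) ^ n

lemma phi_zero : phi 0 = 1 := rfl

lemma phi_deriv (n : ℕ) :
    derivative (phi (n+1)) = C ((n : ℚ) + 1) * (phi n).comp (X + 1) := by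
  cases n with
  | zero => simp [phi]
  | succ m =>
    simp only [phi]
    rw [derivative_mul, derivative_X, derivative_pow, derivative_add, derivative_X,
      derivative_C, mul_comp, X_comp, pow_comp, add_comp, X_comp, C_comp]
    have h : (X + 1 + C ((m : ℚ) + 1)) = X + C (((m:ℕ) + 1 : ℚ) + 1) := by
      push_cast
      simp only [map_add, C_1]
      ring
    rw [h, pow_succ]
    push_cast
    simp only [map_add, C_1]
    ring

lemma poly_eq_of_deriv_eq {p q : ℚ[X]} (h : derivative p = derivative q)
    (h0 : p.eval 0 = q.eval 0) : p = q := by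
  have hd : derivative (p - q) = 0 := by rw [derivative_sub, h, sub_self]
  have h1 := eq_C_of_natDegree_eq_zero (natDegree_eq_zero_of_derivative_eq_zero hd)
  have h2 : (p - q).coeff 0 = 0 := by
    rw [coeff_zero_eq_eval_zero]; simp [h0]
  rw [h2, map_zero, sub_eq_zero] at h1
  exact h1

lemma phi_eval_zero (n : ℕ) : (phi n).eval 0 = if n = 0 then 1 else 0 := by
  cases n <;> simp [phi]

lemma hurwitz (N : ℕ) (x : ℚ) :
    ∑ a ∈ range (N+1), C ((N.choose a : ℚ) * (phi (N-a)).eval x) * phi a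
      = (phi N).comp (X + C x) := by
  induction N generalizing x with
  | zero => simp [phi]
  | succ N ih =>
    apply poly_eq_of_deriv_eq
    · rw [derivative_sum]
      have hcomp : derivative ((phi (N+1)).comp (X + C x))
          = C ((N : ℚ) + 1) * (phi N).comp (X + C x + 1) := by
        rw [derivative_comp, phi_deriv]
        simp only [derivative_add, derivative_X, derivative_C, add_zero, one_mul]
        rw [mul_comp, C_comp, comp_assoc, add_comp, X_comp, one_comp]
      rw [hcomp]
      have hterm : ∀ a ∈ range (N+1),
          derivative (C (((N+1).choose (a+1) : ℚ) * (phi (N+1-(a+1))).eval x) * phi (a+1))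
            = C ((N : ℚ) + 1) * (C ((N.choose a : ℚ) * (phi (N-a)).eval x)
                * (phi a).comp (X + 1)) := by
        intro a ha
        rw [derivative_C_mul, phi_deriv]
        have hNa : N + 1 - (a + 1) = N - a := by omega
        rw [hNa]
        have hc : (((N+1).choose (a+1) : ℚ)) * ((a:ℚ) + 1) = ((N:ℚ)+1) * (N.choose a : ℚ) := by
          have h1 := Nat.add_one_mul_choose_eq N a
          have h2 : ((N+1) * N.choose a : ℚ) = (((N+1).choose (a+1) * (a+1) : ℕ) : ℚ) := by
            rw [← h1]; push_cast; ring
          push_cast at h2 ⊢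
          linarith
        rw [← mul_assoc, ← mul_assoc, ← C_mul, ← C_mul]
        congr 2
        linear_combination (phi (N-a)).eval x * hc
      rw [Finset.sum_range_succ']
      have h0 : derivative (C (((N+1).choose 0 : ℚ) * (phi (N+1-0)).eval x) * phi 0) = 0 := by
        rw [phi_zero, mul_one, derivative_C]
      rw [h0, add_zero, Finset.sum_congr rfl hterm, ← Finset.mul_sum]
      have hsum : ∑ a ∈ range (N+1),
          C ((N.choose a : ℚ) * (phi (N-a)).eval x) * (phi a).comp (X + 1)
          = (phi N).comp (X + C x + 1) := by
        have hc2 : ∀ a ∈ range (N+1),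
            C ((N.choose a : ℚ) * (phi (N-a)).eval x) * (phi a).comp (X + 1)
            = (C ((N.choose a : ℚ) * (phi (N-a)).eval x) * phi a).comp (X + 1) := by
          intro a _; rw [mul_comp, C_comp]
        rw [Finset.sum_congr rfl hc2, ← Polynomial.sum_comp, ih x, comp_assoc]
        congr 1
        rw [add_comp, X_comp, C_comp]
        ring
      rw [hsum]
    · rw [eval_finset_sum]
      rw [Finset.sum_eq_single_of_mem 0 (Finset.mem_range.mpr (by omega))]
      · simp [phi_eval_zero, eval_comp]
      · intro a _ ha
        rcases Nat.exists_eq_succ_of_ne_zero ha with ⟨b, rfl⟩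
        simp [phi_eval_zero]

lemma phi_eval_one (b : ℕ) : (phi b).eval 1 * ((b:ℚ) + 1) = ((b:ℚ)+1)^b := by
  cases b with
  | zero => simp [phi]
  | succ c =>
    simp only [phi, eval_mul, eval_pow, eval_add, eval_X, eval_C, eval_one, one_mul]
    push_cast
    rw [pow_succ]
    ring

lemma deriv_phi_eval0 (a : ℕ) :
    (derivative (phi a)).eval 0 = if a = 0 then 0 else (a:ℚ)^(a-1) := by
  cases a with
  | zero => simp [phi]
  | succ b =>
    rw [phi_deriv]
    simp only [eval_mul, eval_C, eval_comp, eval_add, eval_X, eval_one, zero_add]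
    rw [if_neg (Nat.succ_ne_zero b)]
    simp only [Nat.add_sub_cancel]
    push_cast
    linarith [phi_eval_one b]

lemma phi_star (N : ℕ) (x : ℚ) :
    ∑ a ∈ Icc 1 N, (N.choose a : ℚ) * (a:ℚ)^(a-1) * (phi (N-a)).eval x
      = (N:ℚ) * (phi (N-1)).eval (x+1) := by
  cases N with
  | zero => simp
  | succ M =>
    have H := congrArg (fun p => (derivative p).eval 0) (hurwitz (M+1) x)
    simp only [derivative_sum, derivative_C_mul, eval_finset_sum, eval_mul, eval_C] at H
    rw [derivative_comp] at H
    simp only [derivative_add, derivative_X, derivative_C, add_zero, eval_mul, eval_one,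
      eval_comp, eval_add, eval_X, eval_C, zero_add, one_mul] at H
    rw [phi_deriv] at H
    simp only [eval_mul, eval_C, eval_comp, eval_add, eval_X, eval_one] at H
    have hstep : ∑ a ∈ Icc 1 (M+1), (((M+1).choose a : ℚ) * ((a:ℚ)^(a-1)) * (phi (M+1-a)).eval x)
        = ∑ a ∈ range (M+1+1), ((((M+1).choose a : ℚ)) * (phi (M+1-a)).eval x
            * (derivative (phi a)).eval 0) := by
      rw [← Finset.sum_subset (f := fun a => (((M+1).choose a : ℚ)) * (phi (M+1-a)).eval x
            * (derivative (phi a)).eval 0)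
          (s₁ := Icc 1 (M+1)) (by intro a ha; simp only [Finset.mem_Icc] at ha
                                  simp only [Finset.mem_range]; omega) ?_]
      · apply Finset.sum_congr rfl
        intro a ha
        simp only [Finset.mem_Icc] at ha
        rw [deriv_phi_eval0, if_neg (by omega)]
        ring
      · intro a ha hna
        simp only [Finset.mem_range] at ha
        simp only [Finset.mem_Icc] at hna
        have ha0 : a = 0 := by omega
        subst ha0
        rw [deriv_phi_eval0, if_pos rfl, mul_zero]
    rw [hstep, H]
    push_cast
    simp only [Nat.add_sub_cancel]

def posTuples (k m : ℕ) : Finset (Fin k → ℕ) :=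
  (Finset.Nat.antidiagonalTuple k m).filter (fun a => ∀ i, 0 < a i)

noncomputable def gQ (k m : ℕ) : ℚ :=
  ∑ a ∈ posTuples k m, ∏ i, ((a i : ℚ))^(a i - 1) / (Nat.factorial (a i))

lemma gQ_eq_zero {k m : ℕ} (h : m < k) : gQ k m = 0 := by
  rw [gQ]
  apply Finset.sum_eq_zero
  intro a ha
  simp only [posTuples, Finset.mem_filter, Finset.Nat.mem_antidiagonalTuple] at ha
  obtain ⟨hsum, hpos⟩ := ha
  have h1 : (k : ℕ) ≤ ∑ i, a i := by
    calc (k:ℕ) = ∑ _i : Fin k, 1 := by simp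
    _ ≤ ∑ i, a i := Finset.sum_le_sum (fun i _ => hpos i)
  omega

lemma g_rec (k m : ℕ) :
    gQ (k+1) m = ∑ a ∈ Icc 1 m, ((a:ℚ)^(a-1)/(Nat.factorial a)) * gQ k (m-a) := by
  simp only [gQ, Finset.mul_sum]
  rw [Finset.sum_sigma']
  apply Finset.sum_bij' (i := fun (y : Fin (k+1) → ℕ) _ => (⟨y 0, Fin.tail y⟩ :
      (_ : ℕ) × (Fin k → ℕ)))
    (j := fun z _ => Fin.cons z.1 z.2)
  · -- hi : membership in sigma
    intro y hy
    simp only [posTuples, Finset.mem_filter, Finset.Nat.mem_antidiagonalTuple] at hy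
    obtain ⟨hsum, hpos⟩ := hy
    rw [Fin.sum_univ_succ] at hsum
    simp only [Finset.mem_sigma, Finset.mem_Icc, posTuples, Finset.mem_filter,
      Finset.Nat.mem_antidiagonalTuple]
    refine ⟨⟨hpos 0, by omega⟩, ?_, fun i => hpos (Fin.succ i)⟩
    show ∑ i, Fin.tail y i = m - y 0
    simp only [Fin.tail]
    omega
  · -- hj
    intro z hz
    simp only [Finset.mem_sigma, Finset.mem_Icc, posTuples, Finset.mem_filter,
      Finset.Nat.mem_antidiagonalTuple] at hz
    obtain ⟨⟨h1, h2⟩, hsum, hpos⟩ := hz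
    simp only [posTuples, Finset.mem_filter, Finset.Nat.mem_antidiagonalTuple]
    constructor
    · rw [Fin.sum_cons, hsum]; omega
    · intro i
      refine Fin.cases ?_ ?_ i
      · simpa using (show 0 < z.1 from h1)
      · intro j; simpa using hpos j
  · intro y hy
    exact Fin.cons_self_tail y
  · intro z hz
    simp only [Fin.cons_zero, Fin.tail_cons]
  · intro y hy
    rw [Fin.prod_univ_succ]
    rfl


lemma phi_eval_zero' (x : ℚ) : (phi 0).eval x = 1 := by simp [phi]

lemma phi_eval_succ (c : ℕ) (x : ℚ) :
    (phi (c+1)).eval x = x * (x + (c+1))^c := by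
  simp [phi]

lemma gQ_one (m : ℕ) (hm : 1 ≤ m) : gQ 1 m = (m:ℚ)^(m-1) / (Nat.factorial m) := by
  rw [gQ, posTuples, Finset.Nat.antidiagonalTuple_one, Finset.filter_singleton,
    if_pos (fun i => by simpa using (show 0 < m from hm))]
  rw [Finset.sum_singleton, Fin.prod_univ_one]
  simp

lemma g_formula : ∀ k, 1 ≤ k → ∀ m, k ≤ m →
    gQ k m = (phi (m-k)).eval (k:ℚ) / (Nat.factorial (m-k)) := by
  intro k
  induction k with
  | zero => omega
  | succ k ih =>
    intro _ m hkm
    rcases Nat.eq_zero_or_pos k with rfl | hk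
    · -- k+1 = 1
      rw [gQ_one m (by omega)]
      rcases Nat.exists_eq_add_of_le (by omega : 1 ≤ m) with ⟨c, rfl⟩
      have h1 : 1 + c - 1 = c := by omega
      rw [h1]
      cases c with
      | zero => simp [phi_eval_zero']
      | succ d =>
        rw [phi_eval_succ, show 1+(d+1) = d+2 by omega, Nat.factorial_succ]
        push_cast
        rw [show ((d:ℚ)+2)^(d+1) = ((d:ℚ)+2)^d * ((d:ℚ)+2) by ring]
        have hfac : ((Nat.factorial (d+1) : ℚ)) ≠ 0 := Nat.cast_ne_zero.mpr (Nat.factorial_ne_zero _)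
        field_simp
        ring
    · -- step
      set N := m - k - 1 with hN
      have hmN : m - (k+1) = N := by omega
      have hm : m = N + k + 1 := by omega
      rw [g_rec, hmN]
      rw [← Finset.sum_subset
          (s₁ := Icc 1 (N+1))
          (f := fun a => ((a:ℚ)^(a-1)/(Nat.factorial a)) * gQ k (m-a))
          (by intro a ha; simp only [Finset.mem_Icc] at ha ⊢; omega)
          (by intro a ha hna
              simp only [Finset.mem_Icc] at ha hna
              show ((a:ℚ)^(a-1)/(Nat.factorial a)) * gQ k (m-a) = 0
              rw [gQ_eq_zero (by omega), mul_zero])]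
      have hterm : ∀ a ∈ Icc 1 (N+1),
          ((a:ℚ)^(a-1)/(Nat.factorial a)) * gQ k (m-a)
          = (((N+1).choose a : ℚ) * (a:ℚ)^(a-1) * (phi (N+1-a)).eval (k:ℚ))
              / (Nat.factorial (N+1)) := by
        intro a ha
        simp only [Finset.mem_Icc] at ha
        rw [ih hk (m-a) (by omega), show m - a - k = N + 1 - a by omega]
        rw [Nat.cast_choose ℚ (by omega : a ≤ N+1)]
        have h1 : ((Nat.factorial a : ℚ)) ≠ 0 := Nat.cast_ne_zero.mpr (Nat.factorial_ne_zero _)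
        have h2 : ((Nat.factorial (N+1-a) : ℚ)) ≠ 0 := Nat.cast_ne_zero.mpr (Nat.factorial_ne_zero _)
        have h3 : ((Nat.factorial (N+1) : ℚ)) ≠ 0 := Nat.cast_ne_zero.mpr (Nat.factorial_ne_zero _)
        field_simp
      rw [Finset.sum_congr rfl hterm, ← Finset.sum_div]
      have hstar := phi_star (N+1) (k:ℚ)
      simp only [Nat.add_sub_cancel] at hstar
      rw [hstar]
      have hx : ((k:ℚ) + 1) = ((k+1 : ℕ) : ℚ) := by push_cast; ring
      rw [hx, Nat.factorial_succ]
      have h3 : ((Nat.factorial N : ℚ)) ≠ 0 := Nat.cast_ne_zero.mpr (Nat.factorial_ne_zero _)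
      push_cast
      field_simp

lemma nat_aux (k m : ℕ) (hk : 1 ≤ k) (hkm : k ≤ m) :
    Nat.factorial k * Nat.choose (m-1) (k-1) * Nat.factorial (m-k) = k * Nat.factorial (m-1) := by
  have h2 := Nat.choose_mul_factorial_mul_factorial (show k-1 ≤ m-1 by omega)
  rw [show m-1-(k-1) = m-k by omega] at h2
  calc Nat.factorial k * Nat.choose (m-1) (k-1) * Nat.factorial (m-k)
      = k * (Nat.choose (m-1) (k-1) * Nat.factorial (k-1) * Nat.factorial (m-k)) := by
        rw [← Nat.mul_factorial_pred (by omega : k ≠ 0)]; ring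
    _ = k * Nat.factorial (m-1) := by rw [h2]

/-- The Moreda equality:
`k! · m^(m-k) · C(m-1, k-1) = Σ_{a_1+⋯+a_k=m, a_i ≥ 1} (∏ a_i^(a_i-1)) · m!/∏ a_i!`. -/
theorem moreda_equality (m k : ℕ) (hm : 0 < m) (hk : 1 ≤ k) (hkm : k ≤ m) :
    Nat.factorial k * m ^ (m - k) * Nat.choose (m - 1) (k - 1) =
      ∑ a ∈ (Finset.Nat.antidiagonalTuple k m).filter (fun a => ∀ i, 0 < a i),
        (∏ i, a i ^ (a i - 1)) * (Nat.factorial m / ∏ i, Nat.factorial (a i)) := by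
  have hcast : ((Nat.factorial k * m ^ (m - k) * Nat.choose (m - 1) (k - 1) : ℕ) : ℚ)
      = ((∑ a ∈ (Finset.Nat.antidiagonalTuple k m).filter (fun a => ∀ i, 0 < a i),
        (∏ i, a i ^ (a i - 1)) * (Nat.factorial m / ∏ i, Nat.factorial (a i)) : ℕ) : ℚ) := by
    have hR : ((∑ a ∈ (Finset.Nat.antidiagonalTuple k m).filter (fun a => ∀ i, 0 < a i),
        (∏ i, a i ^ (a i - 1)) * (Nat.factorial m / ∏ i, Nat.factorial (a i)) : ℕ) : ℚ)
        = (Nat.factorial m : ℚ) * gQ k m := by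
      rw [Nat.cast_sum, gQ, Finset.mul_sum]
      apply Finset.sum_congr rfl
      intro a ha
      simp only [posTuples, Finset.mem_filter, Finset.Nat.mem_antidiagonalTuple] at ha
      have hdvd : (∏ i, Nat.factorial (a i)) ∣ Nat.factorial m := by
        rw [← ha.1]
        exact Nat.prod_factorial_dvd_factorial_sum _ _
      rw [Nat.cast_mul, Nat.cast_div hdvd (by
        exact Nat.cast_ne_zero.mpr (Finset.prod_ne_zero_iff.mpr
          (fun i _ => Nat.factorial_ne_zero _)))]
      rw [Nat.cast_prod, Nat.cast_prod]
      rw [Finset.prod_div_distrib]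
      have hQ : (((∏ i, Nat.factorial (a i) : ℕ)) : ℚ) ≠ 0 :=
        Nat.cast_ne_zero.mpr (Finset.prod_ne_zero_iff.mpr (fun i _ => Nat.factorial_ne_zero _))
      push_cast
      push_cast at hQ
      field_simp
    have hL : ((Nat.factorial k * m ^ (m - k) * Nat.choose (m - 1) (k - 1) : ℕ) : ℚ)
        = (Nat.factorial m : ℚ) * gQ k m := by
      rw [g_formula k hk m hkm]
      rcases Nat.eq_zero_or_pos (m - k) with h0 | hpos
      · have hmk : m = k := by omega
        subst hmk
        rw [h0]
        simp [phi_eval_zero']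
      · rcases Nat.exists_eq_add_of_le hpos with ⟨c, hc⟩
        have hc' : m - k = c + 1 := by omega
        rw [hc', phi_eval_succ]
        have hcast2 : ((k:ℚ) + ((c:ℚ)+1)) = (m : ℚ) := by
          have : k + (c+1) = m := by omega
          push_cast [← this]; ring
        rw [hcast2]
        have hnat : Nat.factorial k * Nat.choose (m-1) (k-1) * Nat.factorial (c+1)
            = k * Nat.factorial (m-1) := hc' ▸ nat_aux k m hk hkm
        have hfac : ((Nat.factorial (c+1) : ℚ)) ≠ 0 :=
          Nat.cast_ne_zero.mpr (Nat.factorial_ne_zero _)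
        have hq : (Nat.factorial k : ℚ) * (Nat.choose (m-1) (k-1) : ℚ)
            * (Nat.factorial (c+1) : ℚ) = (k:ℚ) * (Nat.factorial (m-1) : ℚ) := by
          exact_mod_cast hnat
        have hmfac : (Nat.factorial m : ℚ) = m * Nat.factorial (m-1) := by
          exact_mod_cast (Nat.mul_factorial_pred (by omega : m ≠ 0)).symm
        rw [hmfac]
        push_cast
        field_simp
        linear_combination ((m:ℚ)^c * (m:ℚ)) * hq
    rw [hL, hR]
  exact_mod_cast hcast
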